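/- Let R = ℤ[u_1, u_2, u_3, u_4, u_5] / I, where I is the ideal generated by the five polynomials u_i u_{i+3} + u_{i+4} − 1 for i ∈ ℤ/5ℤ (indices taken modulo 5, i.e. the relations u_1u_4 + u_5 = 1, u_2u_5 + u_1 = 1, u_3u_1 + u_2 = 1, u_4u_2 + u_3 = 1, u_5u_3 + u_4 = 1). Then R is a free ℤ-module with basis given by the image of 1 together with the images of the monomials u_i^a u_{i+1}^b for i ∈ ℤ/5ℤ, a ≥ 1 and b ≥ 0 (indices modulo 5). -/

import Mathlib

open MvPolynomial

/-- The ideal of the dihedral relations `u_i u_{i+3} + u_{i+4} = 1` (indices mod 5)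
in `ℤ[u_1, …, u_5]`, defining the affine ring of `M₀,₅^δ`. -/
noncomputable def dihedralIdeal : Ideal (MvPolynomial (Fin 5) ℤ) :=
  Ideal.span (Set.range fun i : Fin 5 => X i * X (i + 3) + X (i + 4) - 1)

/-- The candidate `ℤ`-basis of `ℤ[u_1, …, u_5]/I`: the image of `1` together with
the images of the monomials `u_i^a u_{i+1}^b` for `i ∈ ℤ/5`, `a ≥ 1`, `b ≥ 0`. -/
noncomputable def dihedralBasisFam :
    Unit ⊕ (Fin 5 × {a : ℕ // 1 ≤ a} × ℕ) → MvPolynomial (Fin 5) ℤ ⧸ dihedralIdeal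
  | Sum.inl _ => 1
  | Sum.inr (i, a, b) =>
      Ideal.Quotient.mk dihedralIdeal (X i) ^ (a : ℕ)
        * Ideal.Quotient.mk dihedralIdeal (X (i + 1)) ^ b

/-! ### Normal form machinery -/

def ffind {n : ℕ} (p : Fin n → Prop) [DecidablePred p] : Option (Fin n) :=
  if h : ∃ k, p k then some (Fin.find p h) else none

lemma ffind_eq_none_iff {n : ℕ} {p : Fin n → Prop} [DecidablePred p] :
    ffind p = none ↔ ∀ i, ¬ p i := by
  unfold ffind; split_ifs with h <;> simp_all

lemma ffind_eq_some_iff {n : ℕ} {p : Fin n → Prop} [DecidablePred p] {i : Fin n} :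
    ffind p = some i ↔ p i ∧ ∀ j, p j → i ≤ j := by
  unfold ffind; split_ifs with h
  · rw [Option.some.injEq, Fin.find_eq_iff]; constructor
    · rintro ⟨hi, hj⟩; exact ⟨hi, fun j hpj => not_lt.mp (fun hlt => hj j hlt hpj)⟩
    · rintro ⟨hi, hj⟩; exact ⟨hi, fun j hlt hpj => absurd (hj j hpj) (not_le.mpr hlt)⟩
  · constructor
    · intro hc; exact absurd hc (by simp)
    · rintro ⟨hi, -⟩; exact absurd ⟨i, hi⟩ h

abbrev DIdx : Type := Unit ⊕ (Fin 5 × {a : ℕ // 1 ≤ a} × ℕ)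
abbrev DF : Type := DIdx →₀ ℤ

def ad (k : Fin 5) (e : Fin 5 → ℕ) : Fin 5 → ℕ := fun j => e j + if k = j then 1 else 0
def sb (k : Fin 5) (e : Fin 5 → ℕ) : Fin 5 → ℕ := fun j => e j - if k = j then 1 else 0
def deg (e : Fin 5 → ℕ) : ℕ := ∑ j, e j

lemma fin5_ne3 : ∀ i : Fin 5, i ≠ i + 3 := by decide

lemma ad_self (k : Fin 5) (e : Fin 5 → ℕ) : ad k e k = e k + 1 := by simp [ad]
lemma ad_ne {k j : Fin 5} (h : k ≠ j) (e : Fin 5 → ℕ) : ad k e j = e j := by simp [ad, h]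
lemma ad_pos (k : Fin 5) (e : Fin 5 → ℕ) : 0 < ad k e k := by simp [ad]

lemma sb_ad_self (k : Fin 5) (e : Fin 5 → ℕ) : sb k (ad k e) = e := by
  funext j; by_cases h : k = j <;> simp [sb, ad, h]

lemma ad_comm (a b : Fin 5) (e : Fin 5 → ℕ) : ad a (ad b e) = ad b (ad a e) := by
  funext j; simp only [ad]; omega

lemma sb_ad_ne {a b : Fin 5} (h : a ≠ b) (e : Fin 5 → ℕ) : sb a (ad b e) = ad b (sb a e) := by
  funext j
  by_cases h1 : a = j <;> by_cases h2 : b = j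
  · exact absurd (h1.trans h2.symm) h
  · simp [sb, ad, h1, h2]
  · simp [sb, ad, h1, h2]
  · simp [sb, ad, h1, h2]

lemma ad_sb_self {k : Fin 5} {e : Fin 5 → ℕ} (h : 0 < e k) : ad k (sb k e) = e := by
  funext j; by_cases h1 : k = j
  · subst h1; simp only [sb, ad, eq_self_iff_true, if_true]; omega
  · simp [sb, ad, h1]

lemma deg_ad (k : Fin 5) (e : Fin 5 → ℕ) : deg (ad k e) = deg e + 1 := by
  simp [deg, ad, Finset.sum_add_distrib]

lemma deg_sb {k : Fin 5} {e : Fin 5 → ℕ} (h : 0 < e k) : deg (sb k e) + 1 = deg e := by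
  conv_rhs => rw [← ad_sb_self h]
  rw [deg_ad]

lemma deg_pos {k : Fin 5} {e : Fin 5 → ℕ} (h : 0 < e k) : 0 < deg e :=
  lt_of_lt_of_le h (Finset.single_le_sum (fun _ _ => Nat.zero_le _) (Finset.mem_univ k))

def rp (e : Fin 5 → ℕ) (i : Fin 5) : Prop := 0 < e i ∧ 0 < e (i + 3)

instance (e : Fin 5 → ℕ) (i : Fin 5) : Decidable (rp e i) :=
  inferInstanceAs (Decidable (_ ∧ _))

noncomputable def irr (e : Fin 5 → ℕ) : DF :=
  match ffind (fun k => 0 < e k ∧ e (k + 4) = 0) with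
  | none => Finsupp.single (Sum.inl ()) 1
  | some k => Finsupp.single (Sum.inr (k, ⟨max (e k) 1, le_max_right _ _⟩, e (k + 1))) 1

noncomputable def N' : ℕ → (Fin 5 → ℕ) → DF
  | 0, e => irr e
  | n+1, e =>
    match ffind (rp e) with
    | none => irr e
    | some i => N' n (sb (i + 3) (sb i e)) - N' n (ad (i + 4) (sb (i + 3) (sb i e)))

noncomputable def NN (e : Fin 5 → ℕ) : DF := N' (deg e) e

lemma N'_succ_def (n : ℕ) (e : Fin 5 → ℕ) :
    N' (n + 1) e = match ffind (rp e) with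
      | none => irr e
      | some i => N' n (sb (i + 3) (sb i e)) - N' n (ad (i + 4) (sb (i + 3) (sb i e))) := rfl

lemma N'_none {e : Fin 5 → ℕ} (h : ffind (rp e) = none) (n : ℕ) : N' n e = irr e := by
  cases n with
  | zero => rfl
  | succ n => rw [N'_succ_def, h]

lemma N'_some {e : Fin 5 → ℕ} {i : Fin 5} (hf : ffind (rp e) = some i) (n : ℕ) :
    N' (n + 1) e = N' n (sb (i + 3) (sb i e)) - N' n (ad (i + 4) (sb (i + 3) (sb i e))) := by
  rw [N'_succ_def, hf]

lemma sb_pos {e : Fin 5 → ℕ} {i : Fin 5} (hrp : rp e i) : 0 < sb i e (i + 3) := by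
  have hne : i ≠ i + 3 := fin5_ne3 i
  simp only [sb, if_neg hne]
  have := hrp.2; omega

lemma N'_succ : ∀ n, ∀ e : Fin 5 → ℕ, deg e ≤ n → N' (n + 1) e = N' n e := by
  intro n
  induction n with
  | zero =>
    intro e h
    have hz : ∀ j, e j = 0 := by
      intro j; by_contra hj
      have := deg_pos (Nat.pos_of_ne_zero hj); omega
    have hf : ffind (rp e) = none :=
      ffind_eq_none_iff.mpr (fun i hi => by simp [rp, hz] at hi)
    rw [N'_none hf, N'_none hf]
  | succ n IH =>
    intro e h
    cases hf : ffind (rp e) with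
    | none => rw [N'_none hf, N'_none hf]
    | some i =>
      have hrp : rp e i := (ffind_eq_some_iff.mp hf).1
      have hd1 : deg (sb i e) + 1 = deg e := deg_sb hrp.1
      have hd2 : deg (sb (i + 3) (sb i e)) + 1 = deg (sb i e) := deg_sb (sb_pos hrp)
      have hd3 : deg (ad (i + 4) (sb (i + 3) (sb i e))) = deg (sb (i + 3) (sb i e)) + 1 :=
        deg_ad _ _
      rw [N'_some hf, N'_some hf, IH _ (by omega), IH _ (by omega)]

lemma N'_eq {e : Fin 5 → ℕ} : ∀ n, deg e ≤ n → N' n e = NN e := by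
  have key : ∀ k n, deg e ≤ n → N' (n + k) e = N' n e := by
    intro k
    induction k with
    | zero => intro n _; rfl
    | succ k IH =>
      intro n h
      have h2 : n + (k + 1) = (n + k) + 1 := rfl
      rw [h2, N'_succ _ _ (by omega), IH _ h]
  intro n h
  have h2 : n = deg e + (n - deg e) := by omega
  rw [NN, h2, key _ _ le_rfl]

lemma Nred {e : Fin 5 → ℕ} {i : Fin 5} (hf : ffind (rp e) = some i) :
    NN e = NN (sb (i + 3) (sb i e)) - NN (ad (i + 4) (sb (i + 3) (sb i e))) := by
  have hrp : rp e i := (ffind_eq_some_iff.mp hf).1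
  have hd1 : deg (sb i e) + 1 = deg e := deg_sb hrp.1
  have hd2 : deg (sb (i + 3) (sb i e)) + 1 = deg (sb i e) := deg_sb (sb_pos hrp)
  have hd3 : deg (ad (i + 4) (sb (i + 3) (sb i e))) = deg (sb (i + 3) (sb i e)) + 1 :=
    deg_ad _ _
  obtain ⟨m, hm⟩ : ∃ m, deg e = m + 1 := ⟨deg e - 1, by have := deg_pos hrp.1; omega⟩
  rw [NN, hm, N'_some hf, N'_eq _ (by omega), N'_eq _ (by omega)]

lemma Nirr {e : Fin 5 → ℕ} (h : ffind (rp e) = none) : NN e = irr e := N'_none h _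
lemma fin5_cases (j i : Fin 5) : j = i ∨ j = i + 1 ∨ j = i + 2 ∨ j = i + 3 ∨ j = i + 4 := by
  revert j i; decide

lemma f5 : ∀ i : Fin 5,
    i + 1 + 3 = i + 4 ∧ i + 1 + 4 = i ∧ i + 2 + 3 = i ∧ i + 2 + 4 = i + 1 ∧
    i + 3 + 3 = i + 1 ∧ i + 3 + 4 = i + 2 ∧ i + 4 + 3 = i + 2 ∧ i + 4 + 4 = i + 3 := by
  decide

lemma f5ne : ∀ i : Fin 5, i ≠ i + 1 ∧ i ≠ i + 2 ∧ i ≠ i + 3 ∧ i ≠ i + 4 ∧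
    i + 1 ≠ i + 2 ∧ i + 1 ≠ i + 3 ∧ i + 1 ≠ i + 4 ∧ i + 2 ≠ i + 3 ∧
    i + 2 ≠ i + 4 ∧ i + 3 ≠ i + 4 := by
  decide

lemma key : ∀ n : ℕ, ∀ (e : Fin 5 → ℕ) (i : Fin 5), deg e ≤ n →
    NN (ad i (ad (i + 3) e)) = NN e - NN (ad (i + 4) e) := by
  intro n
  induction n using Nat.strong_induction_on with
  | _ n IH =>
  intro e i hdeg
  obtain ⟨a13, a14, a23, a24, a33, a34, a43, a44⟩ := f5 i
  obtain ⟨n1, n2, n3, n4, n12, n13, n14, n23, n24, n34⟩ := f5ne i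
  set f := ad i (ad (i + 3) e) with hfdef
  have hfi : 0 < f i := ad_pos _ _
  have hfi3 : 0 < f (i + 3) := by
    rw [hfdef, ad_comm]; exact ad_pos _ _
  obtain ⟨j, hj⟩ : ∃ j, ffind (rp f) = some j := by
    cases hfind : ffind (rp f) with
    | none => exact absurd ⟨hfi, hfi3⟩ (ffind_eq_none_iff.mp hfind i)
    | some j => exact ⟨j, rfl⟩
  have hjrp : rp f j := (ffind_eq_some_iff.mp hj).1
  have hred := Nred hj
  rcases fin5_cases j i with h | h | h | h | h
  · -- j = i : direct
    rw [h] at hred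
    have E1 : sb (i + 3) (sb i f) = e := by
      rw [hfdef, sb_ad_self, sb_ad_self]
    rw [hred, E1]
  · -- j = i + 1 : disjoint diamond
    rw [h] at hred hjrp
    have he1 : 0 < e (i + 1) := by
      have h0 := hjrp.1
      rwa [hfdef, ad_ne n1, ad_ne (Ne.symm n13)] at h0
    have he4 : 0 < e (i + 4) := by
      have h0 := hjrp.2
      rw [a13] at h0
      rwa [hfdef, ad_ne n4, ad_ne n34] at h0
    set g := sb (i + 4) (sb (i + 1) e) with hgdef
    have hp1 : 0 < sb (i + 1) e (i + 4) := by
      simpa [sb, if_neg n14] using he4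
    have hge : e = ad (i + 1) (ad (i + 4) g) := by
      rw [hgdef, ad_sb_self hp1, ad_sb_self he1]
    have E1 : sb (i + 1 + 3) (sb (i + 1) f) = ad i (ad (i + 3) g) := by
      rw [a13, hfdef, sb_ad_ne (Ne.symm n1), sb_ad_ne n13,
          sb_ad_ne (Ne.symm n4), sb_ad_ne (Ne.symm n34), ← hgdef]
    rw [E1, a14] at hred
    have hdg : deg g + 2 = deg e := by
      have d1 := deg_sb he1
      have d2 := deg_sb hp1
      rw [← hgdef] at d2
      omega
    have hne : 1 ≤ deg e := deg_pos he1
    have k1 := IH (n - 1) (by omega) g i (by omega)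
    have k2 := IH (n - 1) (by omega) (ad i g) i (by rw [deg_ad]; omega)
    have k3 := IH (n - 1) (by omega) g (i + 1) (by omega)
    have k4 := IH (n - 1) (by omega) (ad (i + 4) g) (i + 1) (by rw [deg_ad]; omega)
    rw [a13, a14] at k3 k4
    have c1 : ad i (ad i (ad (i + 3) g)) = ad i (ad (i + 3) (ad i g)) := by
      rw [ad_comm i (i + 3) g]
    rw [c1, k1, k2] at hred
    rw [hge]
    have c2 : ad (i + 4) (ad (i + 1) (ad (i + 4) g)) = ad (i + 1) (ad (i + 4) (ad (i + 4) g)) :=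
      ad_comm _ _ _
    rw [c2, k3, k4, hred]
    have c3 : NN (ad (i + 4) (ad i g)) = NN (ad i (ad (i + 4) g)) :=
      congrArg NN (ad_comm _ _ _)
    rw [c3]; abel
  · -- j = i + 2 : overlap at i
    rw [h] at hred hjrp
    have he2 : 0 < e (i + 2) := by
      have h0 := hjrp.1
      rwa [hfdef, ad_ne n2, ad_ne (Ne.symm n23)] at h0
    set g := sb (i + 2) e with hgdef
    have hge : e = ad (i + 2) g := by rw [hgdef, ad_sb_self he2]
    have E1 : sb (i + 2 + 3) (sb (i + 2) f) = ad (i + 3) g := by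
      rw [a23, hfdef, sb_ad_ne (Ne.symm n2), sb_ad_ne n23, ← hgdef, sb_ad_self]
    rw [E1, a24] at hred
    have hdg : deg g + 1 = deg e := by
      have d1 := deg_sb he2; rw [← hgdef] at d1; omega
    have hne : 1 ≤ deg e := deg_pos he2
    have k1 := IH (n - 1) (by omega) g (i + 3) (by omega)
    have k2 := IH (n - 1) (by omega) g (i + 4) (by omega)
    rw [a33, a34] at k1
    rw [a43, a44] at k2
    have c1 : ad (i + 1) (ad (i + 3) g) = ad (i + 3) (ad (i + 1) g) := ad_comm _ _ _
    rw [c1, k1] at hred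
    rw [hge]
    have c2 : ad (i + 4) (ad (i + 2) g) = ad (i + 4) (ad (i + 2) g) := rfl
    rw [k2, hred]
    abel
  · -- j = i + 3 : overlap at i + 3
    rw [h] at hred hjrp
    have he1 : 0 < e (i + 1) := by
      have h0 := hjrp.2
      rw [a33] at h0
      rwa [hfdef, ad_ne n1, ad_ne (Ne.symm n13)] at h0
    set g := sb (i + 1) e with hgdef
    have hge : e = ad (i + 1) g := by rw [hgdef, ad_sb_self he1]
    have E1 : sb (i + 3 + 3) (sb (i + 3) f) = ad i g := by
      rw [a33, hfdef, sb_ad_ne (Ne.symm n3), sb_ad_self, sb_ad_ne (Ne.symm n1), ← hgdef]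
    rw [E1, a34] at hred
    have hdg : deg g + 1 = deg e := by
      have d1 := deg_sb he1; rw [← hgdef] at d1; omega
    have hne : 1 ≤ deg e := deg_pos he1
    have k1 := IH (n - 1) (by omega) g (i + 2) (by omega)
    have k2 := IH (n - 1) (by omega) g (i + 1) (by omega)
    rw [a23, a24] at k1
    rw [a13, a14] at k2
    have c1 : ad (i + 2) (ad i g) = ad (i + 2) (ad i g) := rfl
    rw [k1] at hred
    rw [hge]
    have c2 : ad (i + 4) (ad (i + 1) g) = ad (i + 1) (ad (i + 4) g) := ad_comm _ _ _
    rw [c2, k2, hred]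
    abel
  · -- j = i + 4 : disjoint diamond
    rw [h] at hred hjrp
    have he4 : 0 < e (i + 4) := by
      have h0 := hjrp.1
      rwa [hfdef, ad_ne n4, ad_ne n34] at h0
    have he2 : 0 < e (i + 2) := by
      have h0 := hjrp.2
      rw [a43] at h0
      rwa [hfdef, ad_ne n2, ad_ne (Ne.symm n23)] at h0
    set g := sb (i + 2) (sb (i + 4) e) with hgdef
    have hp1 : 0 < sb (i + 4) e (i + 2) := by
      simpa [sb, if_neg (Ne.symm n24)] using he2
    have hge : e = ad (i + 4) (ad (i + 2) g) := by
      rw [hgdef, ad_sb_self hp1, ad_sb_self he4]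
    have E1 : sb (i + 4 + 3) (sb (i + 4) f) = ad i (ad (i + 3) g) := by
      rw [a43, hfdef, sb_ad_ne (Ne.symm n4), sb_ad_ne (Ne.symm n34),
          sb_ad_ne (Ne.symm n2), sb_ad_ne n23, ← hgdef]
    rw [E1, a44] at hred
    have hdg : deg g + 2 = deg e := by
      have d1 := deg_sb he4
      have d2 := deg_sb hp1
      rw [← hgdef] at d2
      omega
    have hne : 1 ≤ deg e := deg_pos he4
    have k1 := IH (n - 1) (by omega) g i (by omega)
    have k2 := IH (n - 1) (by omega) (ad (i + 3) g) i (by rw [deg_ad]; omega)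
    have k3 := IH (n - 1) (by omega) g (i + 4) (by omega)
    have k4 := IH (n - 1) (by omega) (ad (i + 4) g) (i + 4) (by rw [deg_ad]; omega)
    rw [a43, a44] at k3 k4
    have c1 : ad (i + 3) (ad i (ad (i + 3) g)) = ad i (ad (i + 3) (ad (i + 3) g)) :=
      ad_comm _ _ _
    rw [c1, k1, k2] at hred
    rw [hge]
    have c2 : ad (i + 4) (ad (i + 4) (ad (i + 2) g)) = ad (i + 4) (ad (i + 2) (ad (i + 4) g)) := by
      rw [ad_comm (i + 4) (i + 2) g]
    rw [c2, k3, k4, hred]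
    have c3 : NN (ad (i + 4) (ad (i + 3) g)) = NN (ad (i + 3) (ad (i + 4) g)) :=
      congrArg NN (ad_comm _ _ _)
    rw [c3]; abel

/-! ### Evaluation of the normal form on irreducible monomials -/

lemma irr_def (e : Fin 5 → ℕ) : irr e =
    match ffind (fun k => 0 < e k ∧ e (k + 4) = 0) with
    | none => Finsupp.single (Sum.inl ()) 1
    | some k => Finsupp.single (Sum.inr (k, ⟨max (e k) 1, le_max_right _ _⟩, e (k + 1))) 1 := rfl

lemma NN_zero : NN (fun _ => 0) = Finsupp.single (Sum.inl ()) 1 := by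
  have h1 : ffind (rp (fun _ : Fin 5 => 0)) = none :=
    ffind_eq_none_iff.mpr (by intro i; simp [rp])
  have h2 : ffind (fun k : Fin 5 => 0 < (fun _ : Fin 5 => 0) k ∧
      (fun _ : Fin 5 => 0) (k + 4) = 0) = none :=
    ffind_eq_none_iff.mpr (by intro i; simp)
  rw [Nirr h1, irr_def, h2]

def bexp (i : Fin 5) (a b : ℕ) : Fin 5 → ℕ :=
  fun x => (if i = x then a else 0) + (if i + 1 = x then b else 0)

lemma NN_basis (i : Fin 5) (a b : ℕ) (ha : 1 ≤ a) :
    NN (bexp i a b) = Finsupp.single (Sum.inr (i, ⟨a, ha⟩, b)) 1 := by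
  obtain ⟨a13, a14, a23, a24, a33, a34, a43, a44⟩ := f5 i
  obtain ⟨n1, n2, n3, n4, n12, n13, n14, n23, n24, n34⟩ := f5ne i
  have v0 : bexp i a b i = a := by simp [bexp, if_neg (Ne.symm n1)]
  have v1 : bexp i a b (i + 1) = b := by simp [bexp, if_neg n1]
  have v2 : bexp i a b (i + 2) = 0 := by simp [bexp, if_neg n2, if_neg n12]
  have v3 : bexp i a b (i + 3) = 0 := by simp [bexp, if_neg n3, if_neg n13]
  have v4 : bexp i a b (i + 4) = 0 := by simp [bexp, if_neg n4, if_neg n14]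
  have hfind : ffind (rp (bexp i a b)) = none := by
    refine ffind_eq_none_iff.mpr ?_
    intro k hk
    obtain ⟨hk1, hk2⟩ := hk
    rcases fin5_cases k i with h | h | h | h | h <;> rw [h] at hk1 hk2
    · rw [v3] at hk2; omega
    · rw [a13, v4] at hk2; omega
    · rw [v2] at hk1; omega
    · rw [v3] at hk1; omega
    · rw [v4] at hk1; omega
  rw [Nirr hfind, irr_def]
  have hfind2 : ffind (fun k => 0 < bexp i a b k ∧ bexp i a b (k + 4) = 0) = some i := by
    rw [ffind_eq_some_iff]
    refine ⟨⟨by rw [v0]; omega, v4⟩, ?_⟩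
    intro j hj
    obtain ⟨hj1, hj2⟩ := hj
    rcases fin5_cases j i with h | h | h | h | h
    · exact le_of_eq h.symm
    · rw [h, a14, v0] at hj2; omega
    · rw [h, v2] at hj1; omega
    · rw [h, v3] at hj1; omega
    · rw [h, v4] at hj1; omega
  rw [hfind2]
  show Finsupp.single ((Sum.inr (i, ⟨max (bexp i a b i) 1, le_max_right _ _⟩, bexp i a b (i + 1))) : DIdx) (1 : ℤ)
      = Finsupp.single (Sum.inr (i, ⟨a, ha⟩, b)) 1
  have hsub : (⟨max (bexp i a b i) 1, le_max_right _ _⟩ : {x : ℕ // 1 ≤ x}) = ⟨a, ha⟩ :=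
    Subtype.ext (by rw [v0]; exact max_eq_left ha)
  rw [hsub, v1]

/-! ### The linear map φ -/

lemma coe_add_single (d : Fin 5 →₀ ℕ) (k : Fin 5) :
    ((d + Finsupp.single k 1 : Fin 5 →₀ ℕ) : Fin 5 → ℕ) = ad k (⇑d) := by
  funext x; simp [ad, Finsupp.single_apply]

lemma X_mono (k : Fin 5) : (X k : MvPolynomial (Fin 5) ℤ) = monomial (Finsupp.single k 1) 1 := by
  rw [← pow_one (X k), MvPolynomial.X_pow_eq_monomial]

noncomputable def phi : MvPolynomial (Fin 5) ℤ →ₗ[ℤ] DF :=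
  (MvPolynomial.basisMonomials (Fin 5) ℤ).constr ℤ (fun e => NN ⇑e)

lemma phi_monomial (e : Fin 5 →₀ ℕ) (c : ℤ) : phi (monomial e c) = c • NN ⇑e := by
  have h1 : (monomial e c : MvPolynomial (Fin 5) ℤ) = c • monomial e 1 := by
    rw [smul_monomial, smul_eq_mul, mul_one]
  rw [h1, map_smul]
  congr 1
  rw [show (monomial e 1 : MvPolynomial (Fin 5) ℤ) = (MvPolynomial.basisMonomials (Fin 5) ℤ) e
      from (congrFun (MvPolynomial.coe_basisMonomials (Fin 5) ℤ) e).symm]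
  exact Module.Basis.constr_basis _ _ _ _

lemma phi_gen (u : Fin 5 →₀ ℕ) (c : ℤ) (i : Fin 5) :
    phi (monomial u c * (X i * X (i + 3) + X (i + 4) - 1)) = 0 := by
  rw [X_mono i, X_mono (i + 3), X_mono (i + 4)]
  rw [mul_sub, mul_add, mul_one]
  simp only [monomial_mul, mul_one, one_mul, ← add_assoc]
  rw [map_sub, map_add, phi_monomial, phi_monomial, phi_monomial]
  simp only [coe_add_single]
  rw [ad_comm (i + 3) i, key (deg ⇑u) ⇑u i le_rfl, smul_sub]
  abel

lemma phi_ideal {p : MvPolynomial (Fin 5) ℤ} (hp : p ∈ dihedralIdeal) : phi p = 0 := by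
  have main : ∀ x, x ∈ dihedralIdeal → ∀ q : MvPolynomial (Fin 5) ℤ, phi (q * x) = 0 := by
    intro x hx
    refine Submodule.span_induction ?_ ?_ ?_ ?_ hx
    · rintro y ⟨i, rfl⟩ q
      refine MvPolynomial.induction_on' q (fun u a => phi_gen u a i) (fun p q hp hq => ?_)
      rw [add_mul, map_add, hp, hq, add_zero]
    · intro q; rw [mul_zero, map_zero]
    · intro y z _ _ hy hz q
      rw [mul_add, map_add, hy q, hz q, add_zero]
    · intro a y _ hy q
      rw [smul_eq_mul, ← mul_assoc, hy (q * a)]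
  simpa using main p hp 1

/-! ### Representatives of the candidate basis -/

noncomputable def rep : DIdx → MvPolynomial (Fin 5) ℤ
  | Sum.inl _ => 1
  | Sum.inr (i, a, b) => monomial (Finsupp.single i (a : ℕ) + Finsupp.single (i + 1) b) 1

lemma mk_rep (j : DIdx) : Ideal.Quotient.mk dihedralIdeal (rep j) = dihedralBasisFam j := by
  cases j with
  | inl u => simp [rep, dihedralBasisFam]
  | inr t =>
    obtain ⟨i, a, b⟩ := t
    have h1 : (X i ^ (a : ℕ) * X (i + 1) ^ b : MvPolynomial (Fin 5) ℤ) =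
        monomial (Finsupp.single i (a : ℕ) + Finsupp.single (i + 1) b) 1 := by
      rw [MvPolynomial.X_pow_eq_monomial, MvPolynomial.X_pow_eq_monomial, monomial_mul, one_mul]
    show Ideal.Quotient.mk dihedralIdeal
        (monomial (Finsupp.single i (a : ℕ) + Finsupp.single (i + 1) b) 1) = _
    rw [← h1, map_mul, map_pow, map_pow]
    rfl

lemma phi_rep (j : DIdx) : phi (rep j) = Finsupp.single j 1 := by
  cases j with
  | inl u =>
    have h1 : (rep (Sum.inl u) : MvPolynomial (Fin 5) ℤ) = monomial 0 1 := by
      show (1 : MvPolynomial (Fin 5) ℤ) = monomial 0 1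
      simp
    rw [h1, phi_monomial, one_smul]
    have h2 : ⇑(0 : Fin 5 →₀ ℕ) = (fun _ : Fin 5 => 0) := rfl
    rw [h2, NN_zero]
  | inr t =>
    obtain ⟨i, ⟨a, ha⟩, b⟩ := t
    show phi (monomial (Finsupp.single i a + Finsupp.single (i + 1) b) 1) = _
    rw [phi_monomial, one_smul]
    have hcoe : ⇑(Finsupp.single i a + Finsupp.single (i + 1) b) = bexp i a b := by
      funext x; simp [bexp, Finsupp.single_apply]
    rw [hcoe, NN_basis i a b ha]

/-! ### Linear independence -/

lemma indep : LinearIndependent ℤ dihedralBasisFam := by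
  rw [linearIndependent_iff]
  intro l hl
  rw [Finsupp.linearCombination_apply] at hl
  have h1 : Ideal.Quotient.mk dihedralIdeal (l.sum fun j c => c • rep j) = 0 := by
    rw [← hl, Finsupp.sum, Finsupp.sum, map_sum]
    refine Finset.sum_congr rfl (fun j _ => ?_)
    rw [map_zsmul, mk_rep]
  have h2 : (l.sum fun j c => c • rep j) ∈ dihedralIdeal :=
    Ideal.Quotient.eq_zero_iff_mem.mp h1
  have h3 := phi_ideal h2
  rw [Finsupp.sum, map_sum] at h3
  simp only [map_smul, phi_rep, Finsupp.smul_single', mul_one] at h3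
  have h4 : l.sum Finsupp.single = 0 := h3
  rw [Finsupp.sum_single] at h4
  exact h4

/-! ### Spanning -/

lemma mono_mem : ∀ n : ℕ, ∀ u : Fin 5 →₀ ℕ, deg ⇑u ≤ n →
    Ideal.Quotient.mk dihedralIdeal (monomial u 1) ∈
      Submodule.span ℤ (Set.range dihedralBasisFam) := by
  intro n
  induction n using Nat.strong_induction_on with
  | _ n IH =>
  intro u hdeg
  by_cases hr : ∃ i, 0 < u i ∧ 0 < u (i + 3)
  · -- reducible monomial
    obtain ⟨i, hi1, hi3⟩ := hr
    have hne : i ≠ i + 3 := fin5_ne3 i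
    set u' := u - Finsupp.single i 1 - Finsupp.single (i + 3) 1 with hu'def
    have hu : u = u' + Finsupp.single i 1 + Finsupp.single (i + 3) 1 := by
      ext x
      rw [hu'def]
      simp only [Finsupp.add_apply, Finsupp.tsub_apply, Finsupp.single_apply]
      by_cases h1 : i = x
      · subst h1
        rw [if_pos rfl, if_neg (fun hh => hne hh.symm)]
        omega
      · by_cases h2 : i + 3 = x
        · subst h2
          rw [if_neg h1, if_pos rfl]
          omega
        · rw [if_neg h1, if_neg h2]
          omega
    have hcu : ⇑u = ad (i + 3) (ad i ⇑u') := by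
      rw [hu, coe_add_single, coe_add_single]
    have hdegs : deg ⇑u' + 2 = deg ⇑u := by
      rw [hcu, deg_ad, deg_ad]
    have hgen : Ideal.Quotient.mk dihedralIdeal (X i * X (i + 3) + X (i + 4) - 1) = 0 :=
      Ideal.Quotient.eq_zero_iff_mem.mpr (Submodule.subset_span ⟨i, rfl⟩)
    have hXX : Ideal.Quotient.mk dihedralIdeal (X i) * Ideal.Quotient.mk dihedralIdeal (X (i + 3)) =
        1 - Ideal.Quotient.mk dihedralIdeal (X (i + 4)) := by
      rw [map_sub, map_add, map_mul, map_one] at hgen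
      linear_combination hgen
    have hsplit : (monomial u 1 : MvPolynomial (Fin 5) ℤ) = monomial u' 1 * (X i * X (i + 3)) := by
      have h2 : (monomial u' 1 * (X i * X (i + 3)) : MvPolynomial (Fin 5) ℤ) =
          monomial (u' + Finsupp.single i 1 + Finsupp.single (i + 3) 1) 1 := by
        rw [X_mono i, X_mono (i + 3), ← mul_assoc, monomial_mul, monomial_mul, mul_one, one_mul]
      rw [h2, ← hu]
    have e2mem := IH (n - 1) (by omega) u' (by omega)
    have e3mem := IH (n - 1) (by omega) (u' + Finsupp.single (i + 4) 1)
      (by rw [coe_add_single, deg_ad]; omega)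
    have hfinal : Ideal.Quotient.mk dihedralIdeal (monomial u 1) =
        Ideal.Quotient.mk dihedralIdeal (monomial u' 1) -
        Ideal.Quotient.mk dihedralIdeal (monomial (u' + Finsupp.single (i + 4) 1) 1) := by
      rw [hsplit, map_mul, map_mul, hXX]
      have h4 : (monomial (u' + Finsupp.single (i + 4) 1) 1 : MvPolynomial (Fin 5) ℤ) =
          monomial u' 1 * X (i + 4) := by
        rw [X_mono (i + 4), monomial_mul, mul_one]
      rw [h4, map_mul]
      ring
    rw [hfinal]
    exact sub_mem e2mem e3mem
  · -- irreducible monomial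
    push_neg at hr
    by_cases hz : u = 0
    · rw [hz]
      have h1 : (monomial (0 : Fin 5 →₀ ℕ) (1 : ℤ)) = (1 : MvPolynomial (Fin 5) ℤ) := by simp
      rw [h1, map_one]
      exact Submodule.subset_span ⟨Sum.inl (), rfl⟩
    · obtain ⟨k, hk⟩ : ∃ k, 0 < u k := by
        by_contra hall
        push_neg at hall
        apply hz
        ext x
        simp only [Finsupp.coe_zero, Pi.zero_apply]
        have := hall x
        omega
      have hi : ∃ i : Fin 5, 0 < u i ∧ u (i + 4) = 0 := by
        by_contra hno
        push_neg at hno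
        have h1 : 0 < u (k + 4) := Nat.pos_of_ne_zero (hno k hk)
        have h2 : 0 < u (k + 4 + 4) := Nat.pos_of_ne_zero (hno _ h1)
        rw [(f5 k).2.2.2.2.2.2.2] at h2
        have := hr k hk
        omega
      obtain ⟨i, hipos, hi4⟩ := hi
      obtain ⟨a13, a14, a23, a24, a33, a34, a43, a44⟩ := f5 i
      obtain ⟨n1, n2, n3, n4, n12, n13, n14, n23, n24, n34⟩ := f5ne i
      have hu2 : u (i + 2) = 0 := by
        by_contra h2
        have := hr (i + 2) (Nat.pos_of_ne_zero h2)
        rw [a23] at this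
        omega
      have hu3 : u (i + 3) = 0 := by
        have := hr i hipos
        omega
      have hu : u = Finsupp.single i (u i) + Finsupp.single (i + 1) (u (i + 1)) := by
        ext x
        rw [Finsupp.add_apply, Finsupp.single_apply, Finsupp.single_apply]
        rcases fin5_cases x i with h | h | h | h | h <;> subst h
        · simp [Ne.symm n1]
        · simp [n1]
        · simp [n2, n12, hu2]
        · simp [n3, n13, hu3]
        · simp [n4, n14, hi4]
      have hmk : Ideal.Quotient.mk dihedralIdeal (monomial u 1) =
          dihedralBasisFam (Sum.inr (i, ⟨u i, hipos⟩, u (i + 1))) := by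
        rw [← mk_rep]
        congr 1
        show (monomial u 1 : MvPolynomial (Fin 5) ℤ) = monomial (Finsupp.single i (u i) + Finsupp.single (i + 1) (u (i + 1))) 1
        rw [← hu]
      rw [hmk]
      exact Submodule.subset_span ⟨_, rfl⟩

lemma span_top : Submodule.span ℤ (Set.range dihedralBasisFam) = ⊤ := by
  rw [eq_top_iff]
  rintro x -
  obtain ⟨p, rfl⟩ := Ideal.Quotient.mk_surjective x
  refine MvPolynomial.induction_on' p (fun u c => ?_) (fun p q hp hq => ?_)
  · have h1 : (monomial u c : MvPolynomial (Fin 5) ℤ) = c • monomial u 1 := by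
      rw [smul_monomial, smul_eq_mul, mul_one]
    rw [h1, map_zsmul]
    exact Submodule.smul_mem _ c (mono_mem (deg ⇑u) u le_rfl)
  · rw [map_add]
    exact add_mem hp hq


/-- The quotient `R = ℤ[u_1, …, u_5]/(u_i u_{i+3} + u_{i+4} − 1)_{i ∈ ℤ/5}`
is a free `ℤ`-module with basis given by the image of `1` together with the images
of the monomials `u_i^a u_{i+1}^b` for `i ∈ ℤ/5`, `a ≥ 1`, `b ≥ 0`. -/
theorem dihedral_quotient_free_basis :
    LinearIndependent ℤ dihedralBasisFam ∧
      Submodule.span ℤ (Set.range dihedralBasisFam) = ⊤ := by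
  exact ⟨indep, span_top⟩
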